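/- Let D be a skew-symmetric derivation of the diamond Lie algebra g_4 and let ḡ = g_4 ⊕ ℂe ⊕ ℂf be the double extension of g_4 by D. Then ḡ is decomposable: its center Z(ḡ) is not totally isotropic with respect to the extended bilinear form B̄ (there exist central elements u and f with B̄(u,f) ≠ 0), and hence ḡ is the orthogonal direct sum of two nonzero ideals. -/

import Mathlib

/-- The bracket of the double extension `g ⊕ ℂe ⊕ ℂf` of a quadratic Lie algebra
`(g, B)` by a skew-symmetric derivation `D`: an element `(x, a, c)` represents
`x + a·e + c·f`, and
`[x + a·e + c·f, y + a'·e + c'·f] = [x,y]_g + a·D(y) - a'·D(x) + B(D(x), y)·f`. -/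
def deBracket (h : Type) [LieRing h] [LieAlgebra ℂ h]
    (B : LinearMap.BilinForm ℂ h) (D : h →ₗ[ℂ] h) :
    (h × ℂ × ℂ) → (h × ℂ × ℂ) → (h × ℂ × ℂ) :=
  fun u v => (⁅u.1, v.1⁆ + u.2.1 • D v.1 - v.2.1 • D u.1, 0, B (D u.1) v.1)

/-- The bilinear form `B̄` of the double extension: it extends `B`, satisfies
`B̄(e, f) = 1` and vanishes on all other pairs involving `e` and `f`. -/
def deForm (h : Type) [AddCommGroup h] [Module ℂ h]
    (B : LinearMap.BilinForm ℂ h) : (h × ℂ × ℂ) → (h × ℂ × ℂ) → ℂ :=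
  fun u v => B u.1 v.1 + u.2.1 * v.2.2 + u.2.2 * v.2.1

set_option maxHeartbeats 1000000 in
theorem diamond_aux_inv (g : Type) [LieRing g] [LieAlgebra ℂ g]
    (B : LinearMap.BilinForm ℂ g)
    (b : Module.Basis (Fin 4) ℂ g)
    (hB : ∀ i j, B (b i) (b j) =
      ![![0, 0, 0, 1],
        ![0, 0, 1, 0],
        ![0, 1, 0, 0],
        ![1, 0, 0, 0]] i j)
    (hbr : ∀ i j, ⁅b i, b j⁆ =
      ![![0, b 1, -(b 2), 0],
        ![-(b 1), 0, b 3, 0],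
        ![b 2, -(b 3), 0, 0],
        ![(0 : g), 0, 0, 0]] i j) :
    ∀ u v w : g, B ⁅u, v⁆ w = B u ⁅v, w⁆ := by
  have br00 : ⁅b 0, b 0⁆ = (0 : g) := by simpa using hbr 0 0
  have br01 : ⁅b 0, b 1⁆ = (b 1 : g) := by simpa using hbr 0 1
  have br02 : ⁅b 0, b 2⁆ = (-(b 2) : g) := by simpa using hbr 0 2
  have br03 : ⁅b 0, b 3⁆ = (0 : g) := by simpa using hbr 0 3
  have br10 : ⁅b 1, b 0⁆ = (-(b 1) : g) := by simpa using hbr 1 0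
  have br11 : ⁅b 1, b 1⁆ = (0 : g) := by simpa using hbr 1 1
  have br12 : ⁅b 1, b 2⁆ = (b 3 : g) := by simpa using hbr 1 2
  have br13 : ⁅b 1, b 3⁆ = (0 : g) := by simpa using hbr 1 3
  have br20 : ⁅b 2, b 0⁆ = (b 2 : g) := by simpa using hbr 2 0
  have br21 : ⁅b 2, b 1⁆ = (-(b 3) : g) := by simpa using hbr 2 1
  have br22 : ⁅b 2, b 2⁆ = (0 : g) := by simpa using hbr 2 2
  have br23 : ⁅b 2, b 3⁆ = (0 : g) := by simpa using hbr 2 3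
  have br30 : ⁅b 3, b 0⁆ = (0 : g) := by simpa using hbr 3 0
  have br31 : ⁅b 3, b 1⁆ = (0 : g) := by simpa using hbr 3 1
  have br32 : ⁅b 3, b 2⁆ = (0 : g) := by simpa using hbr 3 2
  have br33 : ⁅b 3, b 3⁆ = (0 : g) := by simpa using hbr 3 3
  have fB00 : B (b 0) (b 0) = (0 : ℂ) := by simpa using hB 0 0
  have fB01 : B (b 0) (b 1) = (0 : ℂ) := by simpa using hB 0 1
  have fB02 : B (b 0) (b 2) = (0 : ℂ) := by simpa using hB 0 2
  have fB03 : B (b 0) (b 3) = (1 : ℂ) := by simpa using hB 0 3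
  have fB10 : B (b 1) (b 0) = (0 : ℂ) := by simpa using hB 1 0
  have fB11 : B (b 1) (b 1) = (0 : ℂ) := by simpa using hB 1 1
  have fB12 : B (b 1) (b 2) = (1 : ℂ) := by simpa using hB 1 2
  have fB13 : B (b 1) (b 3) = (0 : ℂ) := by simpa using hB 1 3
  have fB20 : B (b 2) (b 0) = (0 : ℂ) := by simpa using hB 2 0
  have fB21 : B (b 2) (b 1) = (1 : ℂ) := by simpa using hB 2 1
  have fB22 : B (b 2) (b 2) = (0 : ℂ) := by simpa using hB 2 2
  have fB23 : B (b 2) (b 3) = (0 : ℂ) := by simpa using hB 2 3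
  have fB30 : B (b 3) (b 0) = (1 : ℂ) := by simpa using hB 3 0
  have fB31 : B (b 3) (b 1) = (0 : ℂ) := by simpa using hB 3 1
  have fB32 : B (b 3) (b 2) = (0 : ℂ) := by simpa using hB 3 2
  have fB33 : B (b 3) (b 3) = (0 : ℂ) := by simpa using hB 3 3
  have key : ∀ i j k : Fin 4, B ⁅b i, b j⁆ (b k) = B (b i) ⁅b j, b k⁆ := by
    have m2 : ∀ (h : (2:ℕ) < 4), (⟨2, h⟩ : Fin 4) = 2 := fun _ => rfl
    have m3 : ∀ (h : (3:ℕ) < 4), (⟨3, h⟩ : Fin 4) = 3 := fun _ => rfl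
    intro i j k
    fin_cases i <;> fin_cases j <;> fin_cases k <;>
      simp only [Fin.mk_zero, Fin.mk_one, m2, m3, br00, br01, br02, br03, br10, br11, br12, br13,
        br20, br21, br22, br23, br30, br31, br32, br33, map_neg, map_zero, LinearMap.neg_apply,
        LinearMap.zero_apply, fB00, fB01, fB02, fB03, fB10, fB11, fB12, fB13, fB20, fB21, fB22,
        fB23, fB30, fB31, fB32, fB33, neg_zero, neg_neg]
  have inv1 : ∀ (j k : Fin 4) (u : g), B ⁅u, b j⁆ (b k) = B u ⁅b j, b k⁆ := by
    intro j k u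
    rw [← b.sum_repr u, Fin.sum_univ_four]
    simp only [add_lie, smul_lie, map_add, map_smul, LinearMap.add_apply,
      LinearMap.smul_apply, smul_eq_mul]
    linear_combination (b.repr u 0) * key 0 j k + (b.repr u 1) * key 1 j k +
      (b.repr u 2) * key 2 j k + (b.repr u 3) * key 3 j k
  have inv2 : ∀ (k : Fin 4) (u v : g), B ⁅u, v⁆ (b k) = B u ⁅v, b k⁆ := by
    intro k u v
    rw [← b.sum_repr v, Fin.sum_univ_four]
    simp only [lie_add, lie_smul, add_lie, smul_lie, map_add, map_smul,
      LinearMap.add_apply, LinearMap.smul_apply, smul_eq_mul]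
    linear_combination (b.repr v 0) * inv1 0 k u + (b.repr v 1) * inv1 1 k u +
      (b.repr v 2) * inv1 2 k u + (b.repr v 3) * inv1 3 k u
  intro u v w
  rw [← b.sum_repr w, Fin.sum_univ_four]
  simp only [lie_add, lie_smul, map_add, map_smul, smul_eq_mul]
  linear_combination (b.repr w 0) * inv2 0 u v + (b.repr w 1) * inv2 1 u v +
    (b.repr w 2) * inv2 2 u v + (b.repr w 3) * inv2 3 u v

set_option maxHeartbeats 1000000 in
/-- **Any double extension of the diamond Lie algebra is decomposable.**
Let `g₄` be the diamond Lie algebra (basis `b 0 = X`, `b 1 = P`, `b 2 = Q`, `b 3 = Z`,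
brackets `[X,P] = P`, `[X,Q] = -Q`, `[P,Q] = Z`, form `B(X,Z) = B(P,Q) = 1`, other
values on basis pairs zero), let `D` be a skew-symmetric derivation of `g₄`, and let
`ḡ = g₄ ⊕ ℂe ⊕ ℂf` be the double extension of `g₄` by `D`.  Then the center of `ḡ` is
not totally isotropic for `B̄` (there are central elements `u`, `v` with `B̄(u,v) ≠ 0`),
and `ḡ` is the orthogonal direct sum of two nonzero ideals. -/
theorem diamond_double_extension_decomposable (g : Type) [LieRing g] [LieAlgebra ℂ g]
    [FiniteDimensional ℂ g]
    (B : LinearMap.BilinForm ℂ g)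
    (b : Module.Basis (Fin 4) ℂ g)
    (hB : ∀ i j, B (b i) (b j) =
      ![![0, 0, 0, 1],
        ![0, 0, 1, 0],
        ![0, 1, 0, 0],
        ![1, 0, 0, 0]] i j)
    (hbr : ∀ i j, ⁅b i, b j⁆ =
      ![![0, b 1, -(b 2), 0],
        ![-(b 1), 0, b 3, 0],
        ![b 2, -(b 3), 0, 0],
        ![(0 : g), 0, 0, 0]] i j)
    (D : g →ₗ[ℂ] g)
    (hder : ∀ x y : g, D ⁅x, y⁆ = ⁅D x, y⁆ + ⁅x, D y⁆)
    (hskew : ∀ x y : g, B (D x) y = -(B x (D y))) :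
    (∃ u v : g × ℂ × ℂ,
      (∀ w : g × ℂ × ℂ, deBracket g B D u w = 0 ∧ deBracket g B D w u = 0) ∧
      (∀ w : g × ℂ × ℂ, deBracket g B D v w = 0 ∧ deBracket g B D w v = 0) ∧
      deForm g B u v ≠ 0) ∧
    (∃ I J : Submodule ℂ (g × ℂ × ℂ),
      I ≠ ⊥ ∧ J ≠ ⊥ ∧
      (∀ w : g × ℂ × ℂ, ∀ x ∈ I, deBracket g B D w x ∈ I) ∧
      (∀ w : g × ℂ × ℂ, ∀ x ∈ J, deBracket g B D w x ∈ J) ∧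
      (∀ x ∈ I, ∀ y ∈ J, deForm g B x y = 0) ∧
      I ⊓ J = ⊥ ∧ I ⊔ J = ⊤) := by
  classical
  have br00 : ⁅b 0, b 0⁆ = (0 : g) := by simpa using hbr 0 0
  have br01 : ⁅b 0, b 1⁆ = (b 1 : g) := by simpa using hbr 0 1
  have br02 : ⁅b 0, b 2⁆ = (-(b 2) : g) := by simpa using hbr 0 2
  have br03 : ⁅b 0, b 3⁆ = (0 : g) := by simpa using hbr 0 3
  have br10 : ⁅b 1, b 0⁆ = (-(b 1) : g) := by simpa using hbr 1 0
  have br11 : ⁅b 1, b 1⁆ = (0 : g) := by simpa using hbr 1 1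
  have br12 : ⁅b 1, b 2⁆ = (b 3 : g) := by simpa using hbr 1 2
  have br13 : ⁅b 1, b 3⁆ = (0 : g) := by simpa using hbr 1 3
  have br20 : ⁅b 2, b 0⁆ = (b 2 : g) := by simpa using hbr 2 0
  have br21 : ⁅b 2, b 1⁆ = (-(b 3) : g) := by simpa using hbr 2 1
  have br22 : ⁅b 2, b 2⁆ = (0 : g) := by simpa using hbr 2 2
  have br23 : ⁅b 2, b 3⁆ = (0 : g) := by simpa using hbr 2 3
  have br30 : ⁅b 3, b 0⁆ = (0 : g) := by simpa using hbr 3 0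
  have br31 : ⁅b 3, b 1⁆ = (0 : g) := by simpa using hbr 3 1
  have br32 : ⁅b 3, b 2⁆ = (0 : g) := by simpa using hbr 3 2
  have br33 : ⁅b 3, b 3⁆ = (0 : g) := by simpa using hbr 3 3
  have fB00 : B (b 0) (b 0) = (0 : ℂ) := by simpa using hB 0 0
  have fB01 : B (b 0) (b 1) = (0 : ℂ) := by simpa using hB 0 1
  have fB02 : B (b 0) (b 2) = (0 : ℂ) := by simpa using hB 0 2
  have fB03 : B (b 0) (b 3) = (1 : ℂ) := by simpa using hB 0 3
  have fB10 : B (b 1) (b 0) = (0 : ℂ) := by simpa using hB 1 0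
  have fB11 : B (b 1) (b 1) = (0 : ℂ) := by simpa using hB 1 1
  have fB12 : B (b 1) (b 2) = (1 : ℂ) := by simpa using hB 1 2
  have fB13 : B (b 1) (b 3) = (0 : ℂ) := by simpa using hB 1 3
  have fB20 : B (b 2) (b 0) = (0 : ℂ) := by simpa using hB 2 0
  have fB21 : B (b 2) (b 1) = (1 : ℂ) := by simpa using hB 2 1
  have fB22 : B (b 2) (b 2) = (0 : ℂ) := by simpa using hB 2 2
  have fB23 : B (b 2) (b 3) = (0 : ℂ) := by simpa using hB 2 3
  have fB30 : B (b 3) (b 0) = (1 : ℂ) := by simpa using hB 3 0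
  have fB31 : B (b 3) (b 1) = (0 : ℂ) := by simpa using hB 3 1
  have fB32 : B (b 3) (b 2) = (0 : ℂ) := by simpa using hB 3 2
  have fB33 : B (b 3) (b 3) = (0 : ℂ) := by simpa using hB 3 3
  have h01 : ⁅b 0, b 1⁆ = b 1 := br01
  have h02 : ⁅b 0, b 2⁆ = -(b 2) := br02
  have h12 : ⁅b 1, b 2⁆ = b 3 := br12
  set c : Fin 4 → Fin 4 → ℂ := fun k i => b.repr (D (b i)) k with hc
  have hD : ∀ i, D (b i) = c 0 i • b 0 + c 1 i • b 1 + c 2 i • b 2 + c 3 i • b 3 := by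
    intro i
    have := b.sum_repr (D (b i))
    rw [Fin.sum_univ_four] at this
    exact this.symm
  have e01 := hder (b 0) (b 1)
  rw [h01, hD 0, hD 1] at e01
  simp only [add_lie, smul_lie, lie_add, lie_smul, hbr, lie_self, Matrix.cons_val_zero,
    Matrix.cons_val_one, Matrix.head_cons, Matrix.cons_val_two, Matrix.tail_cons,
    Matrix.cons_val_three, smul_zero, smul_neg, add_zero, zero_add] at e01
  have e02 := hder (b 0) (b 2)
  rw [h02, map_neg, hD 0, hD 2] at e02
  simp only [add_lie, smul_lie, lie_add, lie_smul, hbr, lie_self, Matrix.cons_val_zero,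
    Matrix.cons_val_one, Matrix.head_cons, Matrix.cons_val_two, Matrix.tail_cons,
    Matrix.cons_val_three, smul_zero, smul_neg, add_zero, zero_add] at e02
  have e12 := hder (b 1) (b 2)
  rw [h12, hD 1, hD 2, hD 3] at e12
  simp only [add_lie, smul_lie, lie_add, lie_smul, hbr, lie_self, Matrix.cons_val_zero,
    Matrix.cons_val_one, Matrix.head_cons, Matrix.cons_val_two, Matrix.tail_cons,
    Matrix.cons_val_three, smul_zero, smul_neg, add_zero, zero_add] at e12
  have s00 := hskew (b 0) (b 0)
  rw [hD 0] at s00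
  simp only [map_add, map_smul, LinearMap.add_apply, LinearMap.smul_apply, hB, smul_eq_mul,
    Matrix.cons_val_zero, Matrix.cons_val_one, Matrix.head_cons, Matrix.cons_val_two,
    Matrix.tail_cons, Matrix.cons_val_three, mul_zero, mul_one, add_zero, zero_add, neg_add] at s00
  have s03 := hskew (b 0) (b 3)
  rw [hD 0, hD 3] at s03
  simp only [map_add, map_smul, LinearMap.add_apply, LinearMap.smul_apply, hB, smul_eq_mul,
    Matrix.cons_val_zero, Matrix.cons_val_one, Matrix.head_cons, Matrix.cons_val_two,
    Matrix.tail_cons, Matrix.cons_val_three, mul_zero, mul_one, add_zero, zero_add, neg_add] at s03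
  have r010 : c 0 1 = 0 := by simpa using congrArg (fun z => b.repr z 0) e01
  have r011 : c 0 0 = 0 := by simpa using congrArg (fun z => b.repr z 1) e01
  have r012 : c 2 1 = -c 2 1 := by simpa using congrArg (fun z => b.repr z 2) e01
  have r013 : c 3 1 = -c 2 0 := by simpa using congrArg (fun z => b.repr z 3) e01
  have r020 : c 0 2 = 0 := by simpa using congrArg (fun z => b.repr z 0) e02
  have r021 : -c 1 2 = c 1 2 := by simpa using congrArg (fun z => b.repr z 1) e02
  have r023 : -c 3 2 = c 1 0 := by simpa using congrArg (fun z => b.repr z 3) e02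
  have r120 : c 0 3 = 0 := by simpa using congrArg (fun z => b.repr z 0) e12
  have r121 : c 1 3 = -c 0 2 := by simpa using congrArg (fun z => b.repr z 1) e12
  have r122 : c 2 3 = -c 0 1 := by simpa using congrArg (fun z => b.repr z 2) e12
  have r123 : c 3 3 = c 1 1 + c 2 2 := by simpa using congrArg (fun z => b.repr z 3) e12
  have hc30 : c 3 0 = 0 := by linear_combination s00 / 2
  have hc21 : c 2 1 = 0 := by linear_combination r012 / 2
  have hc12 : c 1 2 = 0 := by linear_combination (-1/2 : ℂ) * r021
  have hc33 : c 3 3 = 0 := by linear_combination s03 - r011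
  have hc22 : c 2 2 = -c 1 1 := by linear_combination hc33 - r123
  have hc32 : c 3 2 = -c 1 0 := by linear_combination -r023
  have hc13 : c 1 3 = 0 := by rw [r121, r020, neg_zero]
  have hc23 : c 2 3 = 0 := by rw [r122, r010, neg_zero]
  -- explicit values of D on the basis
  have hD0 : D (b 0) = c 1 0 • b 1 + c 2 0 • b 2 := by
    rw [hD 0, r011, hc30]; module
  have hD1 : D (b 1) = c 1 1 • b 1 - c 2 0 • b 3 := by
    rw [hD 1, r010, hc21, r013]; module
  have hD2 : D (b 2) = -(c 1 1) • b 2 - c 1 0 • b 3 := by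
    rw [hD 2, r020, hc12, hc22, hc32]; module
  have hD3 : D (b 3) = 0 := by
    rw [hD 3, r120, hc13, hc23, hc33]; module
  -- D is inner: D = ad w₀
  set w₀ : g := c 1 1 • b 0 - c 1 0 • b 1 + c 2 0 • b 2 with hw₀
  have h10 : ⁅b 1, b 0⁆ = -(b 1) := by simpa using hbr 1 0
  have h20 : ⁅b 2, b 0⁆ = b 2 := by simpa using hbr 2 0
  have h21 : ⁅b 2, b 1⁆ = -(b 3) := by simpa using hbr 2 1
  have h03 : ⁅b 0, b 3⁆ = 0 := by simpa using hbr 0 3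
  have h13 : ⁅b 1, b 3⁆ = 0 := by simpa using hbr 1 3
  have h23 : ⁅b 2, b 3⁆ = 0 := by simpa using hbr 2 3
  have ad0 : ⁅w₀, b 0⁆ = D (b 0) := by
    rw [hw₀, add_lie, sub_lie, smul_lie, smul_lie, smul_lie, lie_self, h10, h20, hD0]; module
  have ad1 : ⁅w₀, b 1⁆ = D (b 1) := by
    rw [hw₀, add_lie, sub_lie, smul_lie, smul_lie, smul_lie, lie_self, h01, h21, hD1]; module
  have ad2 : ⁅w₀, b 2⁆ = D (b 2) := by
    rw [hw₀, add_lie, sub_lie, smul_lie, smul_lie, smul_lie, lie_self, h02, h12, hD2]; module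
  have ad3 : ⁅w₀, b 3⁆ = D (b 3) := by
    rw [hw₀, add_lie, sub_lie, smul_lie, smul_lie, smul_lie, h03, h13, h23, hD3]; module
  have had : ∀ y : g, D y = ⁅w₀, y⁆ := by
    have heq : D = LieAlgebra.ad ℂ g w₀ := by
      apply b.ext
      intro i
      fin_cases i
      · exact ad0.symm
      · exact ad1.symm
      · exact ad2.symm
      · exact ad3.symm
    intro y; rw [heq]; rfl
  have hDw₀ : D w₀ = 0 := by rw [had w₀, lie_self]
  have hBDy : ∀ y : g, B w₀ (D y) = 0 := by
    intro y
    have := hskew w₀ y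
    rw [hDw₀] at this
    simpa using this.symm
  -- invariance of B
  have inv : ∀ u v w : g, B ⁅u, v⁆ w = B u ⁅v, w⁆ := diamond_aux_inv g B b hB hbr
  -- the two central elements
  set u₀ : g × ℂ × ℂ := (-w₀, 1, 0) with hu₀
  set v₀ : g × ℂ × ℂ := ((0 : g), (0 : ℂ), (1 : ℂ)) with hv₀
  have cu : ∀ w : g × ℂ × ℂ, deBracket g B D u₀ w = 0 ∧ deBracket g B D w u₀ = 0 := by
    intro w
    have hB3 : B (D w.1) w₀ = 0 := by
      rw [hskew w.1 w₀, hDw₀, map_zero]; simp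
    constructor
    · show (⁅-w₀, w.1⁆ + (1:ℂ) • D w.1 - w.2.1 • D (-w₀), (0:ℂ), B (D (-w₀)) w.1) = 0
      rw [show (0 : g × ℂ × ℂ) = ((0:g), (0:ℂ), (0:ℂ)) from rfl, Prod.mk.injEq, Prod.mk.injEq]
      refine ⟨?_, rfl, ?_⟩
      · rw [had w.1, map_neg, hDw₀, neg_zero, neg_lie]; module
      · rw [map_neg, hDw₀, neg_zero, map_zero]; rfl
    · show (⁅w.1, -w₀⁆ + w.2.1 • D (-w₀) - (1:ℂ) • D w.1, (0:ℂ), B (D w.1) (-w₀)) = 0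
      rw [show (0 : g × ℂ × ℂ) = ((0:g), (0:ℂ), (0:ℂ)) from rfl, Prod.mk.injEq, Prod.mk.injEq]
      refine ⟨?_, rfl, ?_⟩
      · rw [had w.1, map_neg, hDw₀, neg_zero, lie_neg, ← lie_skew w₀ w.1]; module
      · rw [map_neg, hB3, neg_zero]
  have cv : ∀ w : g × ℂ × ℂ, deBracket g B D v₀ w = 0 ∧ deBracket g B D w v₀ = 0 := by
    intro w
    constructor
    · show (⁅(0:g), w.1⁆ + (0:ℂ) • D w.1 - w.2.1 • D 0, (0:ℂ), B (D 0) w.1) = 0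
      simp [Prod.ext_iff]
    · show (⁅w.1, (0:g)⁆ + w.2.1 • D 0 - (0:ℂ) • D w.1, (0:ℂ), B (D w.1) (0:g)) = 0
      simp [Prod.ext_iff]
  have hform : deForm g B u₀ v₀ ≠ 0 := by
    show B (-w₀) 0 + 1 * 1 + 0 * 0 ≠ 0
    simp
  -- the ideals
  set φ : g →ₗ[ℂ] (g × ℂ × ℂ) :=
    LinearMap.prod LinearMap.id (LinearMap.prod (0 : g →ₗ[ℂ] ℂ) (B w₀)) with hφ
  have hφval : ∀ y : g, φ y = (y, (0:ℂ), B w₀ y) := fun y => rfl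
  set I : Submodule ℂ (g × ℂ × ℂ) := Submodule.span ℂ {u₀, v₀} with hI
  set J : Submodule ℂ (g × ℂ × ℂ) := LinearMap.range φ with hJ
  have huI : u₀ ∈ I := Submodule.subset_span (by simp)
  have hvI : v₀ ∈ I := Submodule.subset_span (by simp)
  have hIne : I ≠ ⊥ := by
    intro h
    have := hvI
    rw [h, Submodule.mem_bot] at this
    have : (1:ℂ) = 0 := congrArg (fun p => p.2.2) this
    norm_num at this
  have hJne : J ≠ ⊥ := by
    intro h
    have hb0 : φ (b 0) ∈ J := LinearMap.mem_range_self φ (b 0)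
    rw [h, Submodule.mem_bot] at hb0
    have : b 0 = 0 := congrArg (fun p => p.1) hb0
    exact b.ne_zero 0 this
  have hidealI : ∀ w : g × ℂ × ℂ, ∀ x ∈ I, deBracket g B D w x ∈ I := by
    intro w x hx
    rw [hI] at hx
    have hz : deBracket g B D w x = 0 := by
      induction hx using Submodule.span_induction with
      | mem z hz =>
        rcases hz with h | h
        · rw [h]; exact (cu w).2
        · rw [Set.mem_singleton_iff] at h; rw [h]; exact (cv w).2
      | zero => simp [deBracket, Prod.ext_iff]
      | add y z _ _ hy hz =>
        have h1 : (⁅w.1, y.1⁆ + w.2.1 • D y.1 - y.2.1 • D w.1 : g) = 0 ∧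
            B (D w.1) y.1 = 0 := by
          have := hy
          simpa [deBracket, Prod.ext_iff] using hy
        have h2 : (⁅w.1, z.1⁆ + w.2.1 • D z.1 - z.2.1 • D w.1 : g) = 0 ∧
            B (D w.1) z.1 = 0 := by
          simpa [deBracket, Prod.ext_iff] using hz
        show (⁅w.1, (y+z).1⁆ + w.2.1 • D (y+z).1 - (y+z).2.1 • D w.1, (0:ℂ),
            B (D w.1) (y+z).1) = 0
        have e1 : (⁅w.1, (y+z).1⁆ + w.2.1 • D (y+z).1 - (y+z).2.1 • D w.1 : g)
            = (⁅w.1, y.1⁆ + w.2.1 • D y.1 - y.2.1 • D w.1)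
              + (⁅w.1, z.1⁆ + w.2.1 • D z.1 - z.2.1 • D w.1) := by
          simp only [Prod.fst_add, Prod.snd_add, lie_add, map_add, smul_add, add_smul]
          abel
        have e2 : B (D w.1) (y+z).1 = B (D w.1) y.1 + B (D w.1) z.1 := by
          simp [Prod.fst_add]
        rw [show (0 : g × ℂ × ℂ) = ((0:g), (0:ℂ), (0:ℂ)) from rfl, Prod.mk.injEq, Prod.mk.injEq]
        refine ⟨?_, rfl, ?_⟩
        · rw [e1, h1.1, h2.1, add_zero]
        · rw [e2, h1.2, h2.2, add_zero]
      | smul a y _ hy =>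
        have h1 : (⁅w.1, y.1⁆ + w.2.1 • D y.1 - y.2.1 • D w.1 : g) = 0 ∧
            B (D w.1) y.1 = 0 := by
          simpa [deBracket, Prod.ext_iff] using hy
        show (⁅w.1, (a • y).1⁆ + w.2.1 • D (a • y).1 - (a • y).2.1 • D w.1, (0:ℂ),
            B (D w.1) (a • y).1) = 0
        have e1 : (⁅w.1, (a • y).1⁆ + w.2.1 • D (a • y).1 - (a • y).2.1 • D w.1 : g)
            = a • (⁅w.1, y.1⁆ + w.2.1 • D y.1 - y.2.1 • D w.1) := by
          simp only [Prod.smul_fst, Prod.smul_snd, lie_smul, map_smul, smul_eq_mul]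
          module
        have e2 : B (D w.1) (a • y).1 = a * B (D w.1) y.1 := by
          simp [Prod.smul_fst]
        rw [show (0 : g × ℂ × ℂ) = ((0:g), (0:ℂ), (0:ℂ)) from rfl, Prod.mk.injEq, Prod.mk.injEq]
        refine ⟨?_, rfl, ?_⟩
        · rw [e1, h1.1, smul_zero]
        · rw [e2, h1.2, mul_zero]
    rw [hz]; exact Submodule.zero_mem I
  have hidealJ : ∀ w : g × ℂ × ℂ, ∀ x ∈ J, deBracket g B D w x ∈ J := by
    intro w x hx
    rw [hJ] at hx
    obtain ⟨y, rfl⟩ := hx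
    rw [hJ]
    refine ⟨⁅w.1, y⁆ + w.2.1 • D y, ?_⟩
    rw [hφval, hφval]
    show (⁅w.1, y⁆ + w.2.1 • D y, (0:ℂ), B w₀ (⁅w.1, y⁆ + w.2.1 • D y))
      = (⁅w.1, y⁆ + w.2.1 • D y - (0:ℂ) • D w.1, (0:ℂ), B (D w.1) y)
    have e3 : B (D w.1) y = B w₀ (⁅w.1, y⁆ + w.2.1 • D y) := by
      rw [map_add, map_smul, hBDy y, had w.1, inv w₀ w.1 y, smul_eq_mul]
      ring
    simp [Prod.ext_iff, e3]
  have horth : ∀ x ∈ I, ∀ y ∈ J, deForm g B x y = 0 := by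
    intro x hx y hy
    rw [hJ] at hy
    obtain ⟨z, rfl⟩ := hy
    rw [hI] at hx
    rw [hφval]
    induction hx using Submodule.span_induction with
    | mem p hp =>
      rcases hp with h | h
      · rw [h]
        show B (-w₀) z + 1 * B w₀ z + 0 * 0 = 0
        simp
      · rw [Set.mem_singleton_iff] at h; rw [h]
        show B 0 z + 0 * B w₀ z + 1 * 0 = 0
        simp
    | zero =>
      show B 0 z + 0 * B w₀ z + 0 * 0 = 0
      simp
    | add p q _ _ hp hq =>
      show B (p+q).1 z + (p+q).2.1 * B w₀ z + (p+q).2.2 * 0 = 0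
      have hp' : B p.1 z + p.2.1 * B w₀ z + p.2.2 * 0 = 0 := hp
      have hq' : B q.1 z + q.2.1 * B w₀ z + q.2.2 * 0 = 0 := hq
      simp only [Prod.fst_add, Prod.snd_add, map_add, LinearMap.add_apply]
      linear_combination hp' + hq'
    | smul a p _ hp =>
      show B (a • p).1 z + (a • p).2.1 * B w₀ z + (a • p).2.2 * 0 = 0
      have hp' : B p.1 z + p.2.1 * B w₀ z + p.2.2 * 0 = 0 := hp
      simp only [Prod.smul_fst, Prod.smul_snd, map_smul, LinearMap.smul_apply, smul_eq_mul]
      linear_combination a * hp'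
  have hinf : I ⊓ J = ⊥ := by
    rw [Submodule.eq_bot_iff]
    rintro x ⟨hxI, hxJ⟩
    rw [hJ] at hxJ
    obtain ⟨z, rfl⟩ := hxJ
    rw [hI] at hxI
    obtain ⟨a, e, he⟩ := Submodule.mem_span_pair.mp hxI
    have h1 : a • u₀ + e • v₀ = (a • (-w₀) + e • (0:g), a * 1 + e * 0, a * 0 + e * 1) := rfl
    rw [hφval] at he
    rw [h1] at he
    have ha : a = 0 := by
      have := congrArg (fun p => p.2.1) he
      simpa using this
    have hz : z = 0 := by
      have := congrArg (fun p => p.1) he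
      simp [ha] at this
      exact this.symm
    rw [hφval, hz]
    simp [Prod.ext_iff]
  have hsup : I ⊔ J = ⊤ := by
    rw [Submodule.eq_top_iff']
    intro x
    rw [Submodule.mem_sup]
    refine ⟨x.2.1 • u₀ + (x.2.2 - B w₀ (x.1 + x.2.1 • w₀)) • v₀,
      Submodule.add_mem _ (Submodule.smul_mem _ _ huI) (Submodule.smul_mem _ _ hvI),
      φ (x.1 + x.2.1 • w₀), LinearMap.mem_range_self _ _, ?_⟩
    rw [hφval]
    show (x.2.1 • (-w₀) + (x.2.2 - B w₀ (x.1 + x.2.1 • w₀)) • (0:g), x.2.1 * 1 + _ * 0,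
        x.2.1 * 0 + (x.2.2 - B w₀ (x.1 + x.2.1 • w₀)) * 1)
      + (x.1 + x.2.1 • w₀, (0:ℂ), B w₀ (x.1 + x.2.1 • w₀)) = x
    have : x = (x.1, x.2.1, x.2.2) := rfl
    rw [Prod.ext_iff, Prod.ext_iff]
    refine ⟨?_, ?_, ?_⟩
    · show x.2.1 • (-w₀) + (x.2.2 - B w₀ (x.1 + x.2.1 • w₀)) • (0:g) + (x.1 + x.2.1 • w₀) = x.1
      simp only [smul_zero, smul_neg, add_zero]
      abel
    · show x.2.1 * 1 + (x.2.2 - B w₀ (x.1 + x.2.1 • w₀)) * 0 + 0 = x.2.1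
      ring
    · show x.2.1 * 0 + (x.2.2 - B w₀ (x.1 + x.2.1 • w₀)) * 1 + B w₀ (x.1 + x.2.1 • w₀) = x.2.2
      ring
  exact ⟨⟨u₀, v₀, cu, cv, hform⟩, ⟨I, J, hIne, hJne, hidealI, hidealJ, horth, hinf, hsup⟩⟩
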